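/- Suppose α* ∈ R^D satisfies: there exist points (x̂^1,ŷ^1),...,(x̂^{D+1},ŷ^{D+1}) among the data points such that (a) |ŷ^j - Σ_d α*_d ψ_d(x̂^j)| = max_i |y^i - Σ_d α*_d ψ_d(x^i)| for all j = 1,...,D+1, and (b) 0 lies in the convex hull of the vectors sgn(ŷ^j - Σ_d α*_d ψ_d(x̂^j)) · (ψ_1(x̂^j),...,ψ_D(x̂^j)), j = 1,...,D+1. Then α* is a global minimizer of g(α) = max_i |y^i - Σ_d α_d ψ_d(x^i)|. -/

import Mathlib

/-- sufficiency of the Carathéodory-type optimality condition: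
`D+1` data points with extremal residuals whose signed feature vectors have `0`
in their convex hull certify that `α*` is a global minimizer. -/
theorem stmt4 (n D N : ℕ) (hN : 0 < N) (hND : D < N)
    (x : Fin N → (Fin n → ℝ)) (y : Fin N → ℝ)
    (ψ : Fin D → (Fin n → ℝ) → ℝ) (hψ : ∀ d, Continuous (ψ d))
    (g : (Fin D → ℝ) → ℝ)
    (hg : ∀ α, g α = Finset.univ.sup' (Finset.univ_nonempty_iff.mpr ⟨⟨0, hN⟩⟩)
          fun i => |y i - ∑ d, α d * ψ d (x i)|)
    (αstar : Fin D → ℝ)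
    (j : Fin (D + 1) → Fin N)
    (hres : ∀ l : Fin (D + 1),
      |y (j l) - ∑ d, αstar d * ψ d (x (j l))| = g αstar)
    (hsgn : ∀ l : Fin (D + 1), y (j l) - ∑ d, αstar d * ψ d (x (j l)) ≠ 0)
    (hhull : (0 : Fin D → ℝ) ∈ convexHull ℝ
      (Set.range fun l : Fin (D + 1) =>
        Real.sign (y (j l) - ∑ d, αstar d * ψ d (x (j l))) •
          fun d : Fin D => ψ d (x (j l)))) :
    ∀ β : Fin D → ℝ, g αstar ≤ g β := by
  intro β
  by_contra hcon
  push_neg at hcon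
  set f : (Fin D → ℝ) → ℝ := fun w => ∑ d, (β d - αstar d) * w d with hf
  have hlin : IsLinearMap ℝ f := by
    constructor
    · intro a b
      simp [hf, mul_add, Finset.sum_add_distrib]
    · intro c a
      simp only [hf, Pi.smul_apply, smul_eq_mul, Finset.mul_sum]
      exact Finset.sum_congr rfl fun d _ => by ring
  have hsub : (Set.range fun l : Fin (D + 1) =>
      Real.sign (y (j l) - ∑ d, αstar d * ψ d (x (j l))) •
        fun d : Fin D => ψ d (x (j l))) ⊆ {w | 0 < f w} := by
    rintro _ ⟨l, rfl⟩
    set r := y (j l) - ∑ d, αstar d * ψ d (x (j l)) with hr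
    set s := Real.sign r with hs
    have hsr : s * r = |r| := by
      rcases lt_or_gt_of_ne (hsgn l) with h | h
      · rw [hs, Real.sign_of_neg h, abs_of_neg h]; ring
      · rw [hs, Real.sign_of_pos h, abs_of_pos h]; ring
    have habs1 : |s| = 1 := by
      rcases lt_or_gt_of_ne (hsgn l) with h | h
      · rw [hs, Real.sign_of_neg h]; norm_num
      · rw [hs, Real.sign_of_pos h]; norm_num
    set A := ∑ d, αstar d * ψ d (x (j l)) with hA
    set B := ∑ d, β d * ψ d (x (j l)) with hB
    have hle : s * (y (j l) - B) ≤ g β := by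
      have h1 : s * (y (j l) - B) ≤ |s * (y (j l) - B)| := le_abs_self _
      have h2 : |s * (y (j l) - B)| = |y (j l) - B| := by
        rw [abs_mul, habs1, one_mul]
      have h3 : |y (j l) - B| ≤ g β := by
        rw [hg β]
        exact Finset.le_sup' (fun i => |y i - ∑ d, β d * ψ d (x i)|)
          (Finset.mem_univ (j l))
      linarith
    have hfv : f (s • fun d : Fin D => ψ d (x (j l))) = s * (B - A) := by
      simp only [hf, Pi.smul_apply, smul_eq_mul, hB, hA, Finset.mul_sum,
        ← Finset.sum_sub_distrib]
      exact Finset.sum_congr rfl fun d _ => by ring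
    have hring : s * (B - A) = s * r - s * (y (j l) - B) := by
      rw [hr]; ring
    have hgeq : s * r = g αstar := by rw [hsr]; exact hres l
    show 0 < f (s • fun d : Fin D => ψ d (x (j l)))
    rw [hfv, hring]
    linarith
  have h0 : (0 : Fin D → ℝ) ∈ {w | 0 < f w} :=
    convexHull_min hsub (convex_halfSpace_gt hlin 0) hhull
  simp [hf] at h0
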